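/- Define P_{j,n} = ∑_{i=0}^{j-1} C(n,i) (m(n)/n)^i (1 - m(n)/n)^{n-i}, where m(n) = ⌈k(n) ln n⌉ and k(n) satisfies 1 < k(n) < n, k(n) = o(n/ln n). Then lim_{n→∞} max_{1 ≤ j ≤ k(n)} P_{j,n} = 0. -/

import Mathlib

open Filter

/-- Binomial tail probability bound: with m(n) = ⌈k(n) ln n⌉ and k(n) = o(n/ln n),
    max_{1 ≤ j ≤ k(n)} P_{j,n} → 0. -/
theorem binomial_tail_max_to_zero (k : ℕ → ℕ)
    (hk : ∀ n, 2 ≤ n → 1 < k n ∧ k n < n)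
    (hko : Filter.Tendsto (fun n => (k n : ℝ) * Real.log n / n) atTop (nhds 0)) :
    ∀ ε > (0:ℝ), ∃ N : ℕ, ∀ n ≥ N, ∀ j : ℕ, 1 ≤ j → j ≤ k n →
      (∑ i ∈ Finset.range j, (n.choose i : ℝ) *
          ((⌈(k n : ℝ) * Real.log n⌉₊ : ℝ) / n) ^ i *
          (1 - (⌈(k n : ℝ) * Real.log n⌉₊ : ℝ) / n) ^ (n - i)) < ε := by
  intro ε hε
  set δ : ℝ := Real.exp (-2) * min ε 1 with hδdef
  have hmin_pos : 0 < min ε 1 := lt_min hε one_pos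
  have hδpos : 0 < δ := mul_pos (Real.exp_pos _) hmin_pos
  have ha : Tendsto (fun n : ℕ => ((k n : ℝ) * Real.log n + 1) / n) atTop (nhds 0) := by
    have h2 : Tendsto (fun n : ℕ => (1:ℝ) / n) atTop (nhds 0) :=
      tendsto_one_div_atTop_nhds_zero_nat
    have h3 := hko.add h2
    simp only [add_zero] at h3
    refine h3.congr (fun n => ?_)
    rw [← add_div]
  have hev : ∀ᶠ n in atTop, ((k n : ℝ) * Real.log n + 1) / n < δ :=
    ha.eventually_lt_const hδpos
  obtain ⟨N₀, hN₀⟩ := eventually_atTop.mp hev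
  refine ⟨max N₀ 2, fun n hn j hj1 hjK => ?_⟩
  have hn2 : 2 ≤ n := le_trans (le_max_right _ _) hn
  have hnN : N₀ ≤ n := le_trans (le_max_left _ _) hn
  obtain ⟨hk1, hkn⟩ := hk n hn2
  set K := k n with hKdef
  set m : ℕ := ⌈(K : ℝ) * Real.log n⌉₊ with hmdef
  set a : ℝ := ((K : ℝ) * Real.log n + 1) / n with hadef
  have haδ : a < δ := hN₀ n hnN
  have hn0 : (0:ℝ) < n := by exact_mod_cast (by omega : 0 < n)
  have hlogn : 0 < Real.log n := Real.log_pos (by exact_mod_cast (by omega : 1 < n))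
  have hK1R : (1:ℝ) ≤ K := by exact_mod_cast hk1.le
  have hKpos : (0:ℝ) < K := lt_of_lt_of_le one_pos hK1R
  have hkl : 0 < (K:ℝ) * Real.log n := mul_pos hKpos hlogn
  have hm0 : 0 < m := Nat.ceil_pos.mpr hkl
  have hm0R : (0:ℝ) < m := by exact_mod_cast hm0
  have hm1R : (1:ℝ) ≤ m := by exact_mod_cast hm0
  have hmlb : (K:ℝ) * Real.log n ≤ m := Nat.le_ceil _
  have hman : (m:ℝ) ≤ a * n := by
    rw [hadef, div_mul_cancel₀ _ hn0.ne']
    exact (Nat.ceil_lt_add_one hkl.le).le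
  have hapos : 0 < a := div_pos (by linarith) hn0
  have hδ1 : δ < 1 := by
    have h1 : Real.exp (-2) < 1 := Real.exp_lt_one_iff.mpr (by norm_num)
    have h2 : min ε 1 ≤ 1 := min_le_right _ _
    nlinarith [Real.exp_pos (-2)]
  have ha1 : a < 1 := haδ.trans hδ1
  set p : ℝ := (m:ℝ) / n with hpdef
  have hppos : 0 < p := div_pos hm0R hn0
  have hpa : p ≤ a := (div_le_iff₀ hn0).mpr (by linarith)
  have hp1 : p < 1 := lt_of_le_of_lt hpa ha1
  have h1p0 : (0:ℝ) ≤ 1 - p := by linarith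
  have h1p1 : 1 - p ≤ 1 := by linarith
  have hKnR : (K:ℝ) ≤ n := by exact_mod_cast hkn.le
  -- bound each term
  have hterm : ∀ i ∈ Finset.range j,
      (n.choose i : ℝ) * p ^ i * (1 - p) ^ (n - i) ≤ (m:ℝ) ^ K * (1 - p) ^ (n - K) := by
    intro i hi
    have hij : i < j := Finset.mem_range.mp hi
    have hiK : i ≤ K := by omega
    have h1 : (n.choose i : ℝ) ≤ (n:ℝ) ^ i := by exact_mod_cast Nat.choose_le_pow n i
    calc (n.choose i : ℝ) * p ^ i * (1 - p) ^ (n - i)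
        ≤ (n:ℝ) ^ i * p ^ i * (1 - p) ^ (n - i) := by
          apply mul_le_mul_of_nonneg_right _ (pow_nonneg h1p0 _)
          exact mul_le_mul_of_nonneg_right h1 (pow_nonneg hppos.le _)
      _ = (m:ℝ) ^ i * (1 - p) ^ (n - i) := by
          rw [← mul_pow]
          congr 1
          rw [hpdef]
          field_simp
      _ ≤ (m:ℝ) ^ K * (1 - p) ^ (n - K) := by
          apply mul_le_mul (pow_le_pow_right₀ hm1R hiK)
            (pow_le_pow_of_le_one h1p0 h1p1 (Nat.sub_le_sub_left hiK n))
            (pow_nonneg h1p0 _) (pow_nonneg (by positivity) _)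
  have hsum : (∑ i ∈ Finset.range j, (n.choose i : ℝ) * p ^ i * (1 - p) ^ (n - i))
      ≤ (K:ℝ) * ((m:ℝ) ^ K * (1 - p) ^ (n - K)) := by
    calc (∑ i ∈ Finset.range j, (n.choose i : ℝ) * p ^ i * (1 - p) ^ (n - i))
        ≤ ∑ _i ∈ Finset.range j, (m:ℝ) ^ K * (1 - p) ^ (n - K) :=
          Finset.sum_le_sum hterm
      _ = (j:ℝ) * ((m:ℝ) ^ K * (1 - p) ^ (n - K)) := by
          rw [Finset.sum_const, Finset.card_range, nsmul_eq_mul]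
      _ ≤ (K:ℝ) * ((m:ℝ) ^ K * (1 - p) ^ (n - K)) := by
          apply mul_le_mul_of_nonneg_right (by exact_mod_cast hjK)
          positivity
  have hexp : (1 - p) ^ (n - K) ≤ Real.exp (-(p * ((n:ℝ) - K))) := by
    have h1 : 1 - p ≤ Real.exp (-p) := by
      have := Real.add_one_le_exp (-p); linarith
    calc (1 - p) ^ (n - K) ≤ (Real.exp (-p)) ^ (n - K) := pow_le_pow_left₀ h1p0 h1 _
      _ = Real.exp (-(p * ((n:ℝ) - K))) := by
          rw [← Real.exp_nat_mul]
          congr 1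
          rw [Nat.cast_sub hkn.le]
          ring
  have hL : Real.log K + (K:ℝ) * Real.log m - p * ((n:ℝ) - K) < Real.log ε := by
    have hlogm : Real.log m ≤ Real.log a + Real.log n := by
      calc Real.log m ≤ Real.log (a * n) := Real.log_le_log hm0R hman
        _ = Real.log a + Real.log n := Real.log_mul hapos.ne' hn0.ne'
    have hpnK : (K:ℝ) * Real.log n - a * K ≤ p * ((n:ℝ) - K) := by
      have heq : p * ((n:ℝ) - K) = (m:ℝ) - (m:ℝ) * K / n := by
        rw [hpdef]; field_simp
      rw [heq]
      have h1 : (m:ℝ) * K / n ≤ a * K := by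
        rw [div_le_iff₀ hn0]
        nlinarith
      linarith
    have hlogK : Real.log K ≤ (K:ℝ) := by
      linarith [Real.log_le_sub_one_of_pos hKpos]
    have hloga : 2 + Real.log a < Real.log (min ε 1) := by
      have h1 : Real.log a < Real.log δ := Real.log_lt_log hapos haδ
      have h2 : Real.log δ = -2 + Real.log (min ε 1) := by
        rw [hδdef, Real.log_mul (Real.exp_pos _).ne' hmin_pos.ne', Real.log_exp]
      linarith
    have hminε : Real.log (min ε 1) ≤ Real.log ε :=
      Real.log_le_log hmin_pos (min_le_left _ _)
    have hmin0 : Real.log (min ε 1) ≤ 0 := Real.log_nonpos hmin_pos.le (min_le_right _ _)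
    have hx : 2 + Real.log a ≤ 0 := by linarith
    have hKx : (K:ℝ) * (2 + Real.log a) ≤ 1 * (2 + Real.log a) :=
      mul_le_mul_of_nonpos_right hK1R hx
    have hKm : (K:ℝ) * Real.log m ≤ (K:ℝ) * (Real.log a + Real.log n) :=
      mul_le_mul_of_nonneg_left hlogm hKpos.le
    have haK : a * (K:ℝ) ≤ 1 * (K:ℝ) := mul_le_mul_of_nonneg_right ha1.le hKpos.le
    linarith [hKx, hKm, haK, hpnK, hlogK, hloga, hminε]
  have hfinal : (K:ℝ) * ((m:ℝ) ^ K * Real.exp (-(p * ((n:ℝ) - K)))) < ε := by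
    have hrw : (K:ℝ) * ((m:ℝ) ^ K * Real.exp (-(p * ((n:ℝ) - K))))
        = Real.exp (Real.log K + (K:ℝ) * Real.log m - p * ((n:ℝ) - K)) := by
      rw [Real.exp_sub, Real.exp_add, Real.exp_log hKpos,
        Real.exp_nat_mul, Real.exp_log hm0R, Real.exp_neg]
      ring
    rw [hrw, ← Real.exp_log hε]
    exact Real.exp_lt_exp.mpr hL
  calc (∑ i ∈ Finset.range j, (n.choose i : ℝ) * p ^ i * (1 - p) ^ (n - i))
      ≤ (K:ℝ) * ((m:ℝ) ^ K * (1 - p) ^ (n - K)) := hsum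
    _ ≤ (K:ℝ) * ((m:ℝ) ^ K * Real.exp (-(p * ((n:ℝ) - K)))) := by
        apply mul_le_mul_of_nonneg_left _ hKpos.le
        exact mul_le_mul_of_nonneg_left hexp (by positivity)
    _ < ε := hfinal
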